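/- Bregman divergence of the expected posterior-KL functional equals the expected posterior-to-posterior KL: Let Ψ, O, Φ be finite nonempty sets, let q : Ψ → Δ(O) be a kernel with q(o|ψ) > 0 for all ψ ∈ Ψ and o ∈ O, and let c : Ψ → Φ. For ν in the positive orthant of ℝ^Ψ with Σ_ψ ν(ψ) > 0 and o ∈ O, define n_φ(o) = Σ_{ψ : c(ψ)=φ} ν(ψ) q(o|ψ), m(o) = Σ_φ n_φ(o), and the posterior ν_Φ(φ | o) = n_φ(o)/m(o). Fix ρ ∈ Δ(Φ) with full support and define F(ν) = Σ_ψ ν(ψ) Σ_o q(o|ψ) · KL(ν_Φ(·|o), ρ) = Σ_o Σ_φ n_φ(o) log( n_φ(o) / (m(o) ρ(φ)) ), extended by the formula on the right to all nonzero vectors ν with nonnegative entries, with the convention 0·log 0 = 0. Then: (i) F is convex on Δ(Ψ); and (ii) for every ν ∈ Δ(Ψ) and every ν′ ∈ Δ(Ψ) with full support, Breg_F(ν, ν′) = Σ_ψ ν(ψ) Σ_o q(o|ψ) · KL( ν_Φ(·|o), ν′_Φ(·|o) ), where the Bregman divergence is computed with respect to the stated extension of F. -/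

import Mathlib

open Finset

/-- `n_φ(o) = Σ_{ψ : c(ψ)=φ} ν(ψ) q(o|ψ)`. -/
noncomputable def postNum {Psi O Phi : Type*} [Fintype Psi] [DecidableEq Phi]
    (q : Psi → O → ℝ) (c : Psi → Phi) (ν : Psi → ℝ) (o : O) (φ : Phi) : ℝ :=
  ∑ ψ ∈ univ.filter (fun ψ => c ψ = φ), ν ψ * q ψ o

/-- `m(o) = Σ_ψ ν(ψ) q(o|ψ)`. -/
noncomputable def postMass {Psi O : Type*} [Fintype Psi]
    (q : Psi → O → ℝ) (ν : Psi → ℝ) (o : O) : ℝ :=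
  ∑ ψ, ν ψ * q ψ o

/-- The expected posterior-KL functional
`F(ν) = Σ_o Σ_φ n_φ(o) log( n_φ(o) / (m(o) ρ(φ)) )`, which on `Δ(Ψ)` equals
`Σ_ψ ν(ψ) Σ_o q(o|ψ) KL(ν_Φ(·|o), ρ)` (the convention `0·log 0 = 0` is automatic). -/
noncomputable def postKLFunctional {Psi O Phi : Type*}
    [Fintype Psi] [Fintype O] [Fintype Phi] [DecidableEq Phi]
    (q : Psi → O → ℝ) (c : Psi → Phi) (ρ : Phi → ℝ) (ν : Psi → ℝ) : ℝ :=
  ∑ o, ∑ φ, postNum q c ν o φ * Real.log (postNum q c ν o φ / (postMass q ν o * ρ φ))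

set_option linter.unusedSectionVars false
set_option linter.unusedVariables false
set_option maxHeartbeats 1000000

lemma logsum2 (x1 x2 y1 y2 a b : ℝ) (hx1 : 0 ≤ x1) (hx2 : 0 ≤ x2)
    (hy1 : 0 < y1) (hy2 : 0 < y2) (ha : 0 ≤ a) (hb : 0 ≤ b) (hab : a + b = 1) :
    (a * x1 + b * x2) * Real.log ((a * x1 + b * x2) / (a * y1 + b * y2)) ≤
      a * (x1 * Real.log (x1 / y1)) + b * (x2 * Real.log (x2 / y2)) := by
  have hY : 0 < a * y1 + b * y2 := by
    rcases lt_or_eq_of_le ha with ha' | ha'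
    · have : 0 ≤ b * y2 := mul_nonneg hb hy2.le
      nlinarith
    · have hb1 : b = 1 := by linarith
      simp [← ha', hb1]; linarith
  have hmem1 : x1 / y1 ∈ Set.Ici (0:ℝ) := div_nonneg hx1 hy1.le
  have hmem2 : x2 / y2 ∈ Set.Ici (0:ℝ) := div_nonneg hx2 hy2.le
  have hw1 : 0 ≤ a * y1 / (a * y1 + b * y2) := by positivity
  have hw2 : 0 ≤ b * y2 / (a * y1 + b * y2) := by positivity
  have hwsum : a * y1 / (a * y1 + b * y2) + b * y2 / (a * y1 + b * y2) = 1 := by field_simp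
  have key := Real.convexOn_mul_log.2 hmem1 hmem2 hw1 hw2 hwsum
  simp only [smul_eq_mul] at key
  have hpt : a * y1 / (a * y1 + b * y2) * (x1 / y1) + b * y2 / (a * y1 + b * y2) * (x2 / y2)
      = (a * x1 + b * x2) / (a * y1 + b * y2) := by field_simp
  rw [hpt] at key
  have key2 := mul_le_mul_of_nonneg_left key hY.le
  calc (a * x1 + b * x2) * Real.log ((a * x1 + b * x2) / (a * y1 + b * y2))
      = (a * y1 + b * y2) * ((a * x1 + b * x2) / (a * y1 + b * y2) *
          Real.log ((a * x1 + b * x2) / (a * y1 + b * y2))) := by field_simp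
    _ ≤ (a * y1 + b * y2) * (a * y1 / (a * y1 + b * y2) * (x1 / y1 * Real.log (x1 / y1)) +
          b * y2 / (a * y1 + b * y2) * (x2 / y2 * Real.log (x2 / y2))) := key2
    _ = a * (x1 * Real.log (x1 / y1)) + b * (x2 * Real.log (x2 / y2)) := by field_simp

section aux
variable {Psi O Phi : Type*} [Fintype Psi] [Fintype O] [Fintype Phi] [DecidableEq Phi]

noncomputable def numCLM (q : Psi → O → ℝ) (c : Psi → Phi) (o : O) (φ : Phi) :
    (Psi → ℝ) →L[ℝ] ℝ :=
  LinearMap.toContinuousLinearMap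
    { toFun := fun ν => postNum q c ν o φ
      map_add' := fun ν ν' => by simp [postNum, add_mul, Finset.sum_add_distrib]
      map_smul' := fun r ν => by simp [postNum, Finset.mul_sum, mul_assoc] }

noncomputable def massCLM (q : Psi → O → ℝ) (o : O) : (Psi → ℝ) →L[ℝ] ℝ :=
  LinearMap.toContinuousLinearMap
    { toFun := fun ν => postMass q ν o
      map_add' := fun ν ν' => by simp [postMass, add_mul, Finset.sum_add_distrib]
      map_smul' := fun r ν => by simp [postMass, Finset.mul_sum, mul_assoc] }

@[simp] lemma numCLM_apply (q : Psi → O → ℝ) (c : Psi → Phi) (o : O) (φ : Phi) (ν : Psi → ℝ) :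
    numCLM q c o φ ν = postNum q c ν o φ := rfl

@[simp] lemma massCLM_apply (q : Psi → O → ℝ) (o : O) (ν : Psi → ℝ) :
    massCLM q o ν = postMass q ν o := rfl

lemma sum_postNum (q : Psi → O → ℝ) (c : Psi → Phi) (ν : Psi → ℝ) (o : O) :
    ∑ φ, postNum q c ν o φ = postMass q ν o := by
  classical
  simpa [postNum, postMass] using Finset.sum_fiberwise (univ : Finset Psi) c (fun ψ => ν ψ * q ψ o)

lemma postMass_pos [Nonempty Psi] (q : Psi → O → ℝ) (hqpos : ∀ ψ o, 0 < q ψ o)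
    (ν : Psi → ℝ) (hν0 : ∀ ψ, 0 ≤ ν ψ) (hν1 : ∑ ψ, ν ψ = 1) (o : O) :
    0 < postMass q ν o := by
  have hex : ∃ ψ, 0 < ν ψ := by
    by_contra h
    push_neg at h
    have : ∑ ψ, ν ψ = 0 := Finset.sum_eq_zero fun ψ _ => le_antisymm (h ψ) (hν0 ψ)
    rw [this] at hν1; norm_num at hν1
  obtain ⟨ψ0, hψ0⟩ := hex
  exact Finset.sum_pos' (fun ψ _ => mul_nonneg (hν0 ψ) (hqpos ψ o).le)
    ⟨ψ0, Finset.mem_univ _, mul_pos hψ0 (hqpos ψ0 o)⟩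

lemma postNum_nonneg (q : Psi → O → ℝ) (hqpos : ∀ ψ o, 0 < q ψ o) (c : Psi → Phi)
    (ν : Psi → ℝ) (hν0 : ∀ ψ, 0 ≤ ν ψ) (o : O) (φ : Phi) :
    0 ≤ postNum q c ν o φ :=
  Finset.sum_nonneg fun ψ _ => mul_nonneg (hν0 ψ) (hqpos ψ o).le

lemma postNum_pos_of_pos (q : Psi → O → ℝ) (hqpos : ∀ ψ o, 0 < q ψ o) (c : Psi → Phi)
    {ν ν' : Psi → ℝ} (hν' : ∀ ψ, 0 < ν' ψ) {o : O} {φ : Phi}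
    (hn : 0 < postNum q c ν o φ) : 0 < postNum q c ν' o φ := by
  have hne : (univ.filter (fun ψ => c ψ = φ)).Nonempty := by
    by_contra h
    rw [Finset.not_nonempty_iff_eq_empty] at h
    rw [postNum, h] at hn
    simp at hn
  exact Finset.sum_pos (fun ψ _ => mul_pos (hν' ψ) (hqpos ψ o)) hne

lemma postNum_comb (q : Psi → O → ℝ) (c : Psi → Phi) (ν ν' : Psi → ℝ) (a b : ℝ) (o : O) (φ : Phi) :
    postNum q c (a • ν + b • ν') o φ = a * postNum q c ν o φ + b * postNum q c ν' o φ := by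
  simp [postNum, Finset.mul_sum, ← Finset.sum_add_distrib]
  apply Finset.sum_congr rfl
  intro ψ _
  simp [mul_assoc, add_mul]

lemma postMass_comb (q : Psi → O → ℝ) (ν ν' : Psi → ℝ) (a b : ℝ) (o : O) :
    postMass q (a • ν + b • ν') o = a * postMass q ν o + b * postMass q ν' o := by
  simp [postMass, Finset.mul_sum, ← Finset.sum_add_distrib]
  apply Finset.sum_congr rfl
  intro ψ _
  simp [mul_assoc, add_mul]


lemma postNum_sub (q : Psi → O → ℝ) (c : Psi → Phi) (ν ν' : Psi → ℝ) (o : O) (φ : Phi) :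
    postNum q c (ν - ν') o φ = postNum q c ν o φ - postNum q c ν' o φ := by
  simp [postNum, sub_mul, Finset.sum_sub_distrib]

lemma postMass_sub (q : Psi → O → ℝ) (ν ν' : Psi → ℝ) (o : O) :
    postMass q (ν - ν') o = postMass q ν o - postMass q ν' o := by
  simp [postMass, sub_mul, Finset.sum_sub_distrib]

lemma hasFDerivAt_postKL [Nonempty Psi] (q : Psi → O → ℝ) (hqpos : ∀ ψ o, 0 < q ψ o)
    (c : Psi → Phi) (ρ : Phi → ℝ) (hρpos : ∀ φ, 0 < ρ φ)
    (ν' : Psi → ℝ) (hν' : ∀ ψ, 0 < ν' ψ) :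
    HasFDerivAt (postKLFunctional q c ρ)
      (∑ o, ∑ φ, ((Real.log (postNum q c ν' o φ / (postMass q ν' o * ρ φ)) + 1) • numCLM q c o φ
        + (-(postNum q c ν' o φ / postMass q ν' o)) • massCLM q o)) ν' := by
  have hm' : ∀ o, 0 < postMass q ν' o := fun o =>
    Finset.sum_pos (fun ψ _ => mul_pos (hν' ψ) (hqpos ψ o)) Finset.univ_nonempty
  apply HasFDerivAt.fun_sum
  intro o _
  apply HasFDerivAt.fun_sum
  intro φ _
  by_cases hS : (univ.filter (fun ψ => c ψ = φ)).Nonempty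
  · have hn' : 0 < postNum q c ν' o φ :=
      Finset.sum_pos (fun ψ _ => mul_pos (hν' ψ) (hqpos ψ o)) hS
    have hL : HasFDerivAt (fun ν => postNum q c ν o φ) (numCLM q c o φ) ν' :=
      (numCLM q c o φ).hasFDerivAt
    have hM : HasFDerivAt (fun ν => postMass q ν o) (massCLM q o) ν' :=
      (massCLM q o).hasFDerivAt
    have hlogL := hL.log hn'.ne'
    have hlogM := hM.log (hm' o).ne'
    have hinner := (hlogL.sub hlogM).sub_const (Real.log (ρ φ))
    have hg := hL.mul hinner
    have hev : (fun ν => postNum q c ν o φ *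
        Real.log (postNum q c ν o φ / (postMass q ν o * ρ φ))) =ᶠ[nhds ν']
        (fun ν => postNum q c ν o φ *
          (Real.log (postNum q c ν o φ) - Real.log (postMass q ν o) - Real.log (ρ φ))) := by
      have h1 : ∀ᶠ ν in nhds ν', postNum q c ν o φ ∈ Set.Ioi (0:ℝ) :=
        hL.continuousAt.eventually_mem (isOpen_Ioi.mem_nhds hn')
      have h2 : ∀ᶠ ν in nhds ν', postMass q ν o ∈ Set.Ioi (0:ℝ) :=
        hM.continuousAt.eventually_mem (isOpen_Ioi.mem_nhds (hm' o))
      filter_upwards [h1, h2] with ν hn hm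
      rw [Real.log_div (ne_of_gt hn) (ne_of_gt (mul_pos hm (hρpos φ))),
        Real.log_mul (ne_of_gt hm) (ne_of_gt (hρpos φ))]
      ring
    have := hg.congr_of_eventuallyEq hev
    refine this.congr_fderiv ?_
    ext v
    simp only [ContinuousLinearMap.add_apply, ContinuousLinearMap.smul_apply,
      ContinuousLinearMap.coe_smul', Pi.smul_apply, ContinuousLinearMap.coe_sub',
      Pi.sub_apply, smul_eq_mul, numCLM_apply, massCLM_apply]
    rw [Real.log_div hn'.ne' (ne_of_gt (mul_pos (hm' o) (hρpos φ))),
      Real.log_mul (hm' o).ne' (ne_of_gt (hρpos φ))]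
    field_simp
    ring
  · rw [Finset.not_nonempty_iff_eq_empty] at hS
    have h0 : ∀ ν : Psi → ℝ, postNum q c ν o φ = 0 := by
      intro ν; rw [postNum, hS]; simp
    have hclm : numCLM q c o φ = 0 := by ext v; simp [h0]
    simp only [h0, zero_mul, hclm, smul_zero, zero_div, neg_zero, zero_smul, add_zero]
    exact hasFDerivAt_const 0 ν'

/-- termwise log identity -/
lemma term_log_eq {n n' m m' r : ℝ} (hn : 0 ≤ n) (hm : 0 < m) (hm' : 0 < m') (hr : 0 < r)
    (himp : 0 < n → 0 < n') :
    n * Real.log (n / (m * r)) - n * Real.log (n' / (m' * r))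
      = n * Real.log ((n / m) / (n' / m')) := by
  rcases eq_or_lt_of_le hn with h0 | hpos
  · simp [← h0]
  · have hn' := himp hpos
    rw [Real.log_div hpos.ne' (ne_of_gt (mul_pos hm hr)),
      Real.log_div hn'.ne' (ne_of_gt (mul_pos hm' hr)),
      Real.log_mul hm.ne' hr.ne', Real.log_mul hm'.ne' hr.ne',
      Real.log_div (ne_of_gt (div_pos hpos hm)) (ne_of_gt (div_pos hn' hm')),
      Real.log_div hpos.ne' hm.ne', Real.log_div hn'.ne' hm'.ne']
    ring

end aux

/-- Bregman divergence of the expected posterior-KL functional equals the expected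
posterior-to-posterior KL: `F` is convex on `Δ(Ψ)`, and for `ν ∈ Δ(Ψ)` and full-support
`ν′ ∈ Δ(Ψ)`, `Breg_F(ν, ν′) = Σ_ψ ν(ψ) Σ_o q(o|ψ) KL(ν_Φ(·|o), ν′_Φ(·|o))`. -/
theorem bregman_of_postKLFunctional
    {Psi O Phi : Type*} [Fintype Psi] [Nonempty Psi] [Fintype O] [Nonempty O]
    [Fintype Phi] [Nonempty Phi] [DecidableEq Phi]
    (q : Psi → O → ℝ) (hqpos : ∀ ψ o, 0 < q ψ o) (hq1 : ∀ ψ, ∑ o, q ψ o = 1)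
    (c : Psi → Phi)
    (ρ : Phi → ℝ) (hρ : ρ ∈ stdSimplex ℝ Phi) (hρpos : ∀ φ, 0 < ρ φ) :
    ConvexOn ℝ (stdSimplex ℝ Psi) (postKLFunctional q c ρ) ∧
    (∀ ν ∈ stdSimplex ℝ Psi, ∀ ν' ∈ stdSimplex ℝ Psi, (∀ ψ, 0 < ν' ψ) →
      postKLFunctional q c ρ ν - postKLFunctional q c ρ ν'
          - fderiv ℝ (postKLFunctional q c ρ) ν' (ν - ν')
        = ∑ ψ, ν ψ * ∑ o, q ψ o * ∑ φ,
            (postNum q c ν o φ / postMass q ν o) *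
              Real.log ((postNum q c ν o φ / postMass q ν o)
                / (postNum q c ν' o φ / postMass q ν' o))) := by
  constructor
  · -- Convexity
    refine ⟨convex_stdSimplex ℝ Psi, ?_⟩
    intro x hx y hy a b ha hb hab
    simp only [smul_eq_mul, postKLFunctional, Finset.mul_sum, ← Finset.sum_add_distrib]
    refine Finset.sum_le_sum fun o _ => Finset.sum_le_sum fun φ _ => ?_
    rw [postNum_comb, postMass_comb]
    have hkey := logsum2 (postNum q c x o φ) (postNum q c y o φ)
      (postMass q x o * ρ φ) (postMass q y o * ρ φ) a b
      (postNum_nonneg q hqpos c x hx.1 o φ) (postNum_nonneg q hqpos c y hy.1 o φ)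
      (mul_pos (postMass_pos q hqpos x hx.1 hx.2 o) (hρpos φ))
      (mul_pos (postMass_pos q hqpos y hy.1 hy.2 o) (hρpos φ)) ha hb hab
    have harr : (a * postMass q x o + b * postMass q y o) * ρ φ
        = a * (postMass q x o * ρ φ) + b * (postMass q y o * ρ φ) := by ring
    rw [harr]
    exact hkey
  · -- Bregman identity
    intro ν hν ν' hν' hpos
    have hD := hasFDerivAt_postKL q hqpos c ρ hρpos ν' hpos
    rw [hD.fderiv]
    have hm : ∀ o, 0 < postMass q ν o := postMass_pos q hqpos ν hν.1 hν.2
    have hm' : ∀ o, 0 < postMass q ν' o := postMass_pos q hqpos ν' hν'.1 hν'.2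
    -- simplify the derivative applied to ν - ν'
    have happ : (∑ o, ∑ φ,
        ((Real.log (postNum q c ν' o φ / (postMass q ν' o * ρ φ)) + 1) • numCLM q c o φ
          + (-(postNum q c ν' o φ / postMass q ν' o)) • massCLM q o)) (ν - ν')
        = ∑ o, ∑ φ,
          ((Real.log (postNum q c ν' o φ / (postMass q ν' o * ρ φ)) + 1) *
              (postNum q c ν o φ - postNum q c ν' o φ)
            - (postNum q c ν' o φ / postMass q ν' o) *
              (postMass q ν o - postMass q ν' o)) := by
      simp only [ContinuousLinearMap.coe_sum', Finset.sum_apply,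
        ContinuousLinearMap.add_apply, ContinuousLinearMap.smul_apply, smul_eq_mul,
        numCLM_apply, massCLM_apply, postNum_sub, postMass_sub]
      apply Finset.sum_congr rfl; intro o _
      apply Finset.sum_congr rfl; intro φ _
      ring
    rw [happ]
    have hRHS : (∑ ψ, ν ψ * ∑ o, q ψ o * ∑ φ,
          (postNum q c ν o φ / postMass q ν o) *
            Real.log ((postNum q c ν o φ / postMass q ν o)
              / (postNum q c ν' o φ / postMass q ν' o)))
        = ∑ o, ∑ φ, postNum q c ν o φ *
            Real.log ((postNum q c ν o φ / postMass q ν o)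
              / (postNum q c ν' o φ / postMass q ν' o)) := by
      simp only [Finset.mul_sum]
      rw [Finset.sum_comm]
      apply Finset.sum_congr rfl; intro o _
      rw [Finset.sum_comm]
      apply Finset.sum_congr rfl; intro φ _
      simp only [← mul_assoc, ← Finset.sum_mul]
      rw [show (∑ ψ, ν ψ * q ψ o) = postMass q ν o from rfl]
      rw [mul_comm (postMass q ν o) (postNum q c ν o φ / postMass q ν o),
        div_mul_cancel₀ _ (hm o).ne']
    rw [hRHS, postKLFunctional, postKLFunctional, ← Finset.sum_sub_distrib,
      ← Finset.sum_sub_distrib]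
    apply Finset.sum_congr rfl; intro o _
    rw [← Finset.sum_sub_distrib, ← Finset.sum_sub_distrib]
    have hB : (∑ φ, (postNum q c ν' o φ * ((postMass q ν o - postMass q ν' o) / postMass q ν' o)
        - (postNum q c ν o φ - postNum q c ν' o φ))) = 0 := by
      rw [Finset.sum_sub_distrib, ← Finset.sum_mul, sum_postNum, Finset.sum_sub_distrib,
        sum_postNum, sum_postNum, mul_comm, div_mul_cancel₀ _ (hm' o).ne', sub_self]
    calc (∑ φ, (postNum q c ν o φ * Real.log (postNum q c ν o φ / (postMass q ν o * ρ φ))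
          - postNum q c ν' o φ * Real.log (postNum q c ν' o φ / (postMass q ν' o * ρ φ))
          - ((Real.log (postNum q c ν' o φ / (postMass q ν' o * ρ φ)) + 1) *
              (postNum q c ν o φ - postNum q c ν' o φ)
            - postNum q c ν' o φ / postMass q ν' o *
              (postMass q ν o - postMass q ν' o))))
        = (∑ φ, (postNum q c ν o φ * Real.log (postNum q c ν o φ / (postMass q ν o * ρ φ))
            - postNum q c ν o φ * Real.log (postNum q c ν' o φ / (postMass q ν' o * ρ φ))))
          + ∑ φ, (postNum q c ν' o φ * ((postMass q ν o - postMass q ν' o) / postMass q ν' o)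
            - (postNum q c ν o φ - postNum q c ν' o φ)) := by
          rw [← Finset.sum_add_distrib]
          apply Finset.sum_congr rfl; intro φ _
          field_simp
          ring
      _ = ∑ φ, (postNum q c ν o φ * Real.log (postNum q c ν o φ / (postMass q ν o * ρ φ))
            - postNum q c ν o φ * Real.log (postNum q c ν' o φ / (postMass q ν' o * ρ φ))) := by
          rw [hB, add_zero]
      _ = ∑ φ, postNum q c ν o φ *
            Real.log ((postNum q c ν o φ / postMass q ν o)
              / (postNum q c ν' o φ / postMass q ν' o)) := by
          apply Finset.sum_congr rfl; intro φ _
          exact term_log_eq (postNum_nonneg q hqpos c ν hν.1 o φ) (hm o) (hm' o) (hρpos φ)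
            (fun h => postNum_pos_of_pos q hqpos c hpos h)
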